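/- Let n ≥ 1, let A be an IFM of order n and let λ ∈ [0,1]. Then for every m ≥ 1 and all i, j, the m-th power of A under the ∗ operation satisfies (A^m)μ i j = max over all m-paths P from i to j of wμ(P) and (A^m)ν i j = min over all m-paths P from i to j of wν(P). -/

import Mathlib

open Filter Topology

/-- Membership scalar operation of the convex combination of max-min and
maxarithmetic mean–minarithmetic mean: `x ⊛ y = λ·min(x,y) + (1-λ)·(x+y)/2`. -/
noncomputable def starMu (lam x y : ℝ) : ℝ :=
  lam * min x y + (1 - lam) * ((x + y) / 2)

/-- Non-membership scalar operation:
`x ⊛' y = λ·max(x,y) + (1-λ)·(x+y)/2`. -/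
noncomputable def starNu (lam x y : ℝ) : ℝ :=
  lam * max x y + (1 - lam) * ((x + y) / 2)

/-- `A` (given by membership part `Amu` and non-membership part `Anu`) is an
intuitionistic fuzzy matrix. -/
def IsIFM (n : ℕ) (Amu Anu : Fin n → Fin n → ℝ) : Prop :=
  ∀ i j, 0 ≤ Amu i j ∧ 0 ≤ Anu i j ∧ Amu i j + Anu i j ≤ 1

/-- Powers of an IFM under the convex combination `∗` of the max-min and the
maxarithmetic mean–minarithmetic mean operations: `A^1 = A`,
`A^(k+1) = A^k ∗ A` with
`(X ∗ A)μ i j = max_t (Xμ i t ⊛ Aμ t j)` and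
`(X ∗ A)ν i j = min_t (Xν i t ⊛' Aν t j)`.
(The value at `0` is irrelevant; it is set to `A`.) -/
noncomputable def sPow (n : ℕ) (lam : ℝ) (Amu Anu : Fin n → Fin n → ℝ) :
    ℕ → (Fin n → Fin n → ℝ) × (Fin n → Fin n → ℝ)
  | 0 => (Amu, Anu)
  | 1 => (Amu, Anu)
  | m + 2 =>
    let X := sPow n lam Amu Anu (m + 1)
    (fun i j => ⨆ t : Fin n, starMu lam (X.1 i t) (Amu t j),
     fun i j => ⨅ t : Fin n, starNu lam (X.2 i t) (Anu t j))

/-- Left-associated fold of a nonempty list of edge values under a binary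
operation `f` (the empty list, which never occurs for paths, is sent to `0`). -/
noncomputable def foldWeight (f : ℝ → ℝ → ℝ) : List ℝ → ℝ
  | [] => 0
  | x :: xs => xs.foldl f x

/-- Weight of an `m`-path `P` under the `∗` operation, with respect to the
entry matrix `B` and scalar operation `f` (`B = Aμ, f = ⊛` gives `wμ(P)`;
`B = Aν, f = ⊛'` gives `wν(P)`): the left-associated fold of the edge values. -/
noncomputable def sWeight (n m : ℕ) (f : ℝ → ℝ → ℝ) (B : Fin n → Fin n → ℝ)
    (P : Fin (m + 1) → Fin n) : ℝ :=
  foldWeight f (List.ofFn fun k : Fin m => B (P k.castSucc) (P k.succ))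



lemma starMu_mono_left {lam : ℝ} (h0 : 0 ≤ lam) (h1 : lam ≤ 1) {x x' : ℝ}
    (h : x ≤ x') (y : ℝ) : starMu lam x y ≤ starMu lam x' y := by
  unfold starMu
  have := min_le_min h (le_refl y)
  nlinarith [min_le_min h (le_refl y)]

lemma starNu_mono_left {lam : ℝ} (h0 : 0 ≤ lam) (h1 : lam ≤ 1) {x x' : ℝ}
    (h : x ≤ x') (y : ℝ) : starNu lam x y ≤ starNu lam x' y := by
  unfold starNu
  nlinarith [max_le_max h (le_refl y)]

lemma foldWeight_concat (f : ℝ → ℝ → ℝ) (l : List ℝ) (hl : l ≠ []) (x : ℝ) :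
    foldWeight f (l.concat x) = f (foldWeight f l) x := by
  cases l with
  | nil => simp at hl
  | cons a xs => simp [foldWeight, List.foldl_concat]

lemma sWeight_one (n : ℕ) (f : ℝ → ℝ → ℝ) (B : Fin n → Fin n → ℝ)
    (P : Fin 2 → Fin n) : sWeight n 1 f B P = B (P 0) (P 1) := by
  simp [sWeight, foldWeight, List.ofFn_succ, List.ofFn_zero]


lemma sWeight_succ (n m : ℕ) (hm : 1 ≤ m) (f : ℝ → ℝ → ℝ) (B : Fin n → Fin n → ℝ)
    (Q : Fin (m + 2) → Fin n) :
    sWeight n (m + 1) f B Q =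
      f (sWeight n m f B (fun k => Q k.castSucc))
        (B (Q (Fin.last m).castSucc) (Q (Fin.last (m + 1)))) := by
  unfold sWeight
  rw [show (List.ofFn fun k : Fin (m+1) => B (Q k.castSucc) (Q k.succ))
      = (List.ofFn fun i : Fin m => B (Q i.castSucc.castSucc) (Q i.castSucc.succ)).concat
        (B (Q (Fin.last m).castSucc) (Q (Fin.last m).succ)) from List.ofFn_succ' _]
  rw [foldWeight_concat _ _ (by
    intro h
    have := congrArg List.length h
    simp at this
    omega)]
  rw [Fin.succ_last]
  have he : (fun i : Fin m => B (Q i.castSucc.castSucc) (Q i.castSucc.succ))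
      = fun i : Fin m => B ((fun k => Q k.castSucc) i.castSucc)
        ((fun k => Q k.castSucc) i.succ) := by
    funext i
    simp only [Fin.succ_castSucc]
  rw [he]


theorem pathNonempty (n m : ℕ) (hm : 1 ≤ m) (i j : Fin n) :
    Nonempty {P : Fin (m + 1) → Fin n // P 0 = i ∧ P (Fin.last m) = j} := by
  refine ⟨⟨fun k => if k = 0 then i else j, by simp, ?_⟩⟩
  have : Fin.last m ≠ 0 := by
    simp [Fin.ext_iff]
    omega
  simp [this]

lemma main_aux (n : ℕ) (hn : 1 ≤ n) (Amu Anu : Fin n → Fin n → ℝ)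
    (lam : ℝ) (h0 : 0 ≤ lam) (h1 : lam ≤ 1) (m : ℕ) (hm : 1 ≤ m) : ∀ i j : Fin n,
    (sPow n lam Amu Anu m).1 i j =
        (⨆ P : {P : Fin (m + 1) → Fin n // P 0 = i ∧ P (Fin.last m) = j},
          sWeight n m (starMu lam) Amu P.1) ∧
      (sPow n lam Amu Anu m).2 i j =
        ⨅ P : {P : Fin (m + 1) → Fin n // P 0 = i ∧ P (Fin.last m) = j},
          sWeight n m (starNu lam) Anu P.1 := by
  induction m, hm using Nat.le_induction with
  | base =>
    intro i j
    have hne := pathNonempty n 1 le_rfl i j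
    constructor
    · have : (fun P : {P : Fin 2 → Fin n // P 0 = i ∧ P (Fin.last 1) = j} =>
          sWeight n 1 (starMu lam) Amu P.1) = fun _ => Amu i j := by
        funext P
        rw [sWeight_one, P.2.1, show P.1 1 = j from P.2.2]
      show Amu i j = _
      rw [iSup, this, Set.range_const, csSup_singleton]
    · have : (fun P : {P : Fin 2 → Fin n // P 0 = i ∧ P (Fin.last 1) = j} =>
          sWeight n 1 (starNu lam) Anu P.1) = fun _ => Anu i j := by
        funext P
        rw [sWeight_one, P.2.1, show P.1 1 = j from P.2.2]
      show Anu i j = _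
      rw [iInf, this, Set.range_const, csInf_singleton]
  | succ m hm IH =>
    intro i j
    obtain ⟨k, rfl⟩ : ∃ k, m = k + 1 := ⟨m - 1, by omega⟩
    have hpow : sPow n lam Amu Anu (k + 1 + 1)
        = (fun i j => ⨆ t : Fin n, starMu lam ((sPow n lam Amu Anu (k+1)).1 i t) (Amu t j),
           fun i j => ⨅ t : Fin n, starNu lam ((sPow n lam Amu Anu (k+1)).2 i t) (Anu t j)) := rfl
    have hbddμ : ∀ (a b : Fin n), BddAbove (Set.range
        (fun P : {P : Fin (k + 2) → Fin n // P 0 = a ∧ P (Fin.last (k+1)) = b} =>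
          sWeight n (k+1) (starMu lam) Amu P.1)) :=
      fun a b => Set.Finite.bddAbove (Set.finite_range _)
    have hbddν : ∀ (a b : Fin n), BddBelow (Set.range
        (fun P : {P : Fin (k + 2) → Fin n // P 0 = a ∧ P (Fin.last (k+1)) = b} =>
          sWeight n (k+1) (starNu lam) Anu P.1)) :=
      fun a b => Set.Finite.bddBelow (Set.finite_range _)
    have hBigμ : BddAbove (Set.range
        (fun P : {P : Fin (k + 3) → Fin n // P 0 = i ∧ P (Fin.last (k+2)) = j} =>
          sWeight n (k+2) (starMu lam) Amu P.1)) :=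
      Set.Finite.bddAbove (Set.finite_range _)
    have hBigν : BddBelow (Set.range
        (fun P : {P : Fin (k + 3) → Fin n // P 0 = i ∧ P (Fin.last (k+2)) = j} =>
          sWeight n (k+2) (starNu lam) Anu P.1)) :=
      Set.Finite.bddBelow (Set.finite_range _)
    haveI : ∀ a b : Fin n,
        Nonempty {P : Fin (k + 2) → Fin n // P 0 = a ∧ P (Fin.last (k+1)) = b} :=
      fun a b => pathNonempty n (k+1) (by omega) a b
    haveI : Nonempty (Fin n) := ⟨⟨0, by omega⟩⟩
    haveI : Nonempty {P : Fin (k + 3) → Fin n // P 0 = i ∧ P (Fin.last (k+2)) = j} :=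
      pathNonempty n (k+2) (by omega) i j
    constructor
    · rw [hpow]
      apply le_antisymm
      · apply ciSup_le
        intro t
        rw [(IH i t).1]
        obtain ⟨P, hP⟩ := exists_eq_ciSup_of_finite
          (f := fun P : {P : Fin (k + 2) → Fin n // P 0 = i ∧ P (Fin.last (k+1)) = t} =>
            sWeight n (k+1) (starMu lam) Amu P.1)
        rw [← hP]
        set Q : Fin (k + 3) → Fin n := Fin.snoc P.1 j with hQ
        have hQ0 : Q 0 = i := by
          rw [hQ, show (0 : Fin (k+3)) = Fin.castSucc 0 by rfl, Fin.snoc_castSucc, P.2.1]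
        have hQl : Q (Fin.last (k + 2)) = j := by rw [hQ, Fin.snoc_last]
        have hQc : (fun x : Fin (k+2) => Q x.castSucc) = P.1 := by
          funext x; rw [hQ, Fin.snoc_castSucc]
        have hw : sWeight n (k+2) (starMu lam) Amu Q
            = starMu lam (sWeight n (k+1) (starMu lam) Amu P.1) (Amu t j) := by
          rw [sWeight_succ n (k+1) (by omega), hQc, hQl]
          congr 2
          rw [hQ, Fin.snoc_castSucc, P.2.2]
        rw [← hw]
        exact le_ciSup hBigμ ⟨Q, hQ0, hQl⟩
      · apply ciSup_le
        rintro ⟨Q, hQ0, hQl⟩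
        set t : Fin n := Q (Fin.last (k+1)).castSucc with ht
        have hw : sWeight n (k+2) (starMu lam) Amu Q
            = starMu lam (sWeight n (k+1) (starMu lam) Amu (fun x => Q x.castSucc)) (Amu t j) := by
          rw [sWeight_succ n (k+1) (by omega), hQl]
        rw [hw]
        calc starMu lam (sWeight n (k+1) (starMu lam) Amu (fun x => Q x.castSucc)) (Amu t j)
            ≤ starMu lam ((sPow n lam Amu Anu (k+1)).1 i t) (Amu t j) := by
              apply starMu_mono_left h0 h1
              rw [(IH i t).1]
              exact le_ciSup (hbddμ i t) ⟨fun x => Q x.castSucc, hQ0, rfl⟩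
          _ ≤ _ := le_ciSup
              (f := fun t => starMu lam ((sPow n lam Amu Anu (k+1)).1 i t) (Amu t j))
              (Set.Finite.bddAbove (Set.finite_range _)) t
    · rw [hpow]
      apply le_antisymm
      · apply le_ciInf
        rintro ⟨Q, hQ0, hQl⟩
        set t : Fin n := Q (Fin.last (k+1)).castSucc with ht
        have hw : sWeight n (k+2) (starNu lam) Anu Q
            = starNu lam (sWeight n (k+1) (starNu lam) Anu (fun x => Q x.castSucc)) (Anu t j) := by
          rw [sWeight_succ n (k+1) (by omega), hQl]
        rw [hw]
        calc (⨅ t : Fin n, starNu lam ((sPow n lam Amu Anu (k+1)).2 i t) (Anu t j))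
            ≤ starNu lam ((sPow n lam Amu Anu (k+1)).2 i t) (Anu t j) :=
              ciInf_le (Set.Finite.bddBelow (Set.finite_range _)) t
          _ ≤ starNu lam (sWeight n (k+1) (starNu lam) Anu (fun x => Q x.castSucc)) (Anu t j) := by
              apply starNu_mono_left h0 h1
              rw [(IH i t).2]
              exact ciInf_le (hbddν i t) ⟨fun x => Q x.castSucc, hQ0, rfl⟩
      · apply le_ciInf
        intro t
        rw [(IH i t).2]
        obtain ⟨P, hP⟩ := exists_eq_ciInf_of_finite
          (f := fun P : {P : Fin (k + 2) → Fin n // P 0 = i ∧ P (Fin.last (k+1)) = t} =>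
            sWeight n (k+1) (starNu lam) Anu P.1)
        rw [← hP]
        set Q : Fin (k + 3) → Fin n := Fin.snoc P.1 j with hQ
        have hQ0 : Q 0 = i := by
          rw [hQ, show (0 : Fin (k+3)) = Fin.castSucc 0 by rfl, Fin.snoc_castSucc, P.2.1]
        have hQl : Q (Fin.last (k + 2)) = j := by rw [hQ, Fin.snoc_last]
        have hQc : (fun x : Fin (k+2) => Q x.castSucc) = P.1 := by
          funext x; rw [hQ, Fin.snoc_castSucc]
        have hw : sWeight n (k+2) (starNu lam) Anu Q
            = starNu lam (sWeight n (k+1) (starNu lam) Anu P.1) (Anu t j) := by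
          rw [sWeight_succ n (k+1) (by omega), hQc, hQl]
          congr 2
          rw [hQ, Fin.snoc_castSucc, P.2.2]
        rw [← hw]
        exact ciInf_le hBigν ⟨Q, hQ0, hQl⟩


/-- Lemma 4.4: the `(i,j)` entry of the `m`-th power of `A` under the `∗`
operation is the maximum (resp. minimum) over all `m`-paths from `i` to `j` of
the membership (resp. non-membership) path weights. -/
theorem sPow_eq_extreme_weight (n : ℕ) (hn : 1 ≤ n)
    (Amu Anu : Fin n → Fin n → ℝ) (hA : IsIFM n Amu Anu)
    (lam : ℝ) (hlam : lam ∈ Set.Icc (0 : ℝ) 1)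
    (m : ℕ) (hm : 1 ≤ m) (i j : Fin n) :
    (sPow n lam Amu Anu m).1 i j =
        (⨆ P : {P : Fin (m + 1) → Fin n // P 0 = i ∧ P (Fin.last m) = j},
          sWeight n m (starMu lam) Amu P.1) ∧
      (sPow n lam Amu Anu m).2 i j =
        ⨅ P : {P : Fin (m + 1) → Fin n // P 0 = i ∧ P (Fin.last m) = j},
          sWeight n m (starNu lam) Anu P.1 := by
  exact main_aux n hn Amu Anu lam hlam.1 hlam.2 m hm i j
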